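/- Let (M,d) be a homogeneous metric space that admits a metric dilation. Then (M,d) is proper and doubling. -/

import Mathlib

/-- A metric space is doubling: there is `N` such that every ball of radius
`2r` can be covered by at most `N` balls of radius `r`. -/
def IsDoublingSpace (M : Type*) [MetricSpace M] : Prop :=
  ∃ N : ℕ, ∀ (x : M) (r : ℝ), 0 < r →
    ∃ t : Finset M, t.card ≤ N ∧ Metric.ball x (2 * r) ⊆ ⋃ y ∈ t, Metric.ball y r

/-- Natural iterates of a map scaling distances by `c` scale by `c ^ m`. -/
lemma aux_pow_dist {M : Type*} [MetricSpace M] (f : Equiv.Perm M) (c : ℝ)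
    (hf : ∀ x y : M, dist (f x) (f y) = c * dist x y) :
    ∀ (m : ℕ) (x y : M), dist ((f ^ m) x) ((f ^ m) y) = c ^ m * dist x y := by
  intro m
  induction m with
  | zero => simp
  | succ n ih =>
    intro x y
    have h1 : (f ^ (n + 1)) = f ^ n * f := pow_succ f n
    rw [h1]
    simp only [Equiv.Perm.mul_apply]
    rw [ih (f x) (f y), hf x y, pow_succ]
    ring

/-- a homogeneous metric space admitting a metric dilation is
proper and doubling. -/
theorem statement6 (M : Type*) [MetricSpace M] [ConnectedSpace M] [LocallyCompactSpace M]
    (hhom : ∀ x y : M, ∃ f : M ≃ᵢ M, f x = y)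
    (δ : M ≃ M) (lam : ℝ) (hlam : 1 < lam)
    (hδ : ∀ x y : M, dist (δ x) (δ y) = lam * dist x y) :
    ProperSpace M ∧ IsDoublingSpace M := by
  classical
  have hlam0 : (0:ℝ) < lam := lt_trans one_pos hlam
  have hlamne : lam ≠ 0 := ne_of_gt hlam0
  obtain ⟨x₀⟩ : Nonempty M := inferInstance
  -- δ as a permutation
  set p : Equiv.Perm M := δ with hp
  have hpinv : ∀ x y : M, dist (p⁻¹ x) (p⁻¹ y) = lam⁻¹ * dist x y := by
    intro x y
    have h1 : dist (δ (p⁻¹ x)) (δ (p⁻¹ y)) = lam * dist (p⁻¹ x) (p⁻¹ y) := hδ _ _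
    have h2 : δ (p⁻¹ x) = x := δ.apply_symm_apply x
    have h3 : δ (p⁻¹ y) = y := δ.apply_symm_apply y
    rw [h2, h3] at h1
    field_simp [h1]
    rw [h1]; ring
  -- zpow scaling
  have hzdist : ∀ (n : ℤ) (x y : M), dist ((p ^ n) x) ((p ^ n) y) = lam ^ n * dist x y := by
    intro n x y
    cases n with
    | ofNat m =>
      simpa using aux_pow_dist p lam (fun a b => hδ a b) m x y
    | negSucc m =>
      have h1 : (p ^ (Int.negSucc m)) = (p⁻¹) ^ (m + 1) := by
        rw [zpow_negSucc, inv_pow]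
      have h2 : (lam : ℝ) ^ (Int.negSucc m) = (lam⁻¹) ^ (m + 1) := by
        rw [zpow_negSucc, inv_pow]
      rw [h1, h2]
      exact aux_pow_dist p⁻¹ lam⁻¹ hpinv (m + 1) x y
  have hzpos : ∀ n : ℤ, (0:ℝ) < lam ^ n := fun n => zpow_pos hlam0 n
  -- δ is continuous
  have hδcont : Continuous δ := by
    refine (LipschitzWith.of_dist_le_mul (K := Real.toNNReal lam) ?_).continuous
    intro x y
    rw [Real.coe_toNNReal lam (le_of_lt hlam0), hδ]
  -- image of closed ball under δ
  have himg : ∀ (x : M) (s : ℝ), δ '' Metric.closedBall x s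
      = Metric.closedBall (δ x) (lam * s) := by
    intro x s
    ext y
    simp only [Set.mem_image, Metric.mem_closedBall]
    constructor
    · rintro ⟨z, hz, rfl⟩
      rw [hδ]
      exact mul_le_mul_of_nonneg_left hz (le_of_lt hlam0)
    · intro hy
      refine ⟨δ.symm y, ?_, δ.apply_symm_apply y⟩
      have h1 : dist (δ (δ.symm y)) (δ x) = lam * dist (δ.symm y) x := hδ _ _
      rw [δ.apply_symm_apply] at h1
      rw [h1] at hy
      exact le_of_mul_le_mul_left hy hlam0
  -- compact closed balls of a fixed radius around every point, by homogeneity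
  have hmove : ∀ {x : M} {s : ℝ}, IsCompact (Metric.closedBall x s) →
      ∀ y : M, IsCompact (Metric.closedBall y s) := by
    intro x s hx y
    obtain ⟨f, hf⟩ := hhom x y
    have : f '' Metric.closedBall x s = Metric.closedBall y s := by
      rw [f.image_closedBall, hf]
    rw [← this]
    exact hx.image f.continuous
  -- base radius with compact closed ball
  obtain ⟨K, hKc, hKn⟩ := exists_compact_mem_nhds x₀
  obtain ⟨r₀, hr₀, hball⟩ := Metric.mem_nhds_iff.mp hKn
  have hbase : IsCompact (Metric.closedBall x₀ (r₀ / 2)) := by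
    refine hKc.of_isClosed_subset Metric.isClosed_closedBall ?_
    refine subset_trans ?_ hball
    exact Metric.closedBall_subset_ball (by linarith)
  -- compact closed balls of radius (r₀/2) * lam ^ n
  have hstep : ∀ n : ℕ, ∀ y : M, IsCompact (Metric.closedBall y (r₀ / 2 * lam ^ n)) := by
    intro n
    induction n with
    | zero => simpa using fun y => hmove hbase y
    | succ m ih =>
      intro y
      have h1 : IsCompact (δ '' Metric.closedBall x₀ (r₀ / 2 * lam ^ m)) :=
        (ih x₀).image hδcont
      rw [himg] at h1
      have h2 : lam * (r₀ / 2 * lam ^ m) = r₀ / 2 * lam ^ (m + 1) := by ring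
      rw [h2] at h1
      exact hmove h1 y
  -- properness
  have hproper : ProperSpace M := by
    constructor
    intro x r
    obtain ⟨n, hn⟩ := pow_unbounded_of_one_lt (r / (r₀ / 2)) hlam
    have hrle : r ≤ r₀ / 2 * lam ^ n := by
      have h2 : (0:ℝ) < r₀ / 2 := by linarith
      rw [div_lt_iff₀ h2] at hn
      nlinarith
    exact (hstep n x).of_isClosed_subset Metric.isClosed_closedBall
      (Metric.closedBall_subset_closedBall hrle)
  refine ⟨hproper, ?_⟩
  -- doubling
  -- cover the closed ball of radius 2*lam around x₀ by finitely many balls of radius 1/2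
  have hcomp : IsCompact (Metric.closedBall x₀ (2 * lam)) := isCompact_closedBall x₀ _
  obtain ⟨T, hTfin, hTcov⟩ := Metric.totallyBounded_iff.mp hcomp.totallyBounded
    (1/2 : ℝ) (by norm_num)
  refine ⟨hTfin.toFinset.card, ?_⟩
  intro x r hr
  obtain ⟨n, hn1, hn2⟩ := exists_mem_Ico_zpow (y := lam) hr hlam
  -- isometry taking (p ^ n) x₀ to x
  obtain ⟨f, hf⟩ := hhom ((p ^ n) x₀) x
  refine ⟨hTfin.toFinset.image (fun y => f ((p ^ n) y)), Finset.card_image_le, ?_⟩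
  intro w hw
  rw [Metric.mem_ball] at hw
  -- pull back w
  set u : M := f.symm w with hu
  have hud : dist u ((p ^ n) x₀) < 2 * r := by
    have : dist (f u) (f ((p ^ n) x₀)) = dist u ((p ^ n) x₀) := f.isometry.dist_eq _ _
    rw [hu] at this ⊢
    rw [← this, f.apply_symm_apply, hf]
    exact hw
  set v : M := (p ^ (-n)) u with hv
  have hvu : (p ^ n) v = u := by
    rw [hv, ← Equiv.Perm.mul_apply, ← zpow_add]
    simp
  have hvd : dist v x₀ < 2 * lam := by
    have h1 : dist ((p ^ n) v) ((p ^ n) x₀) = lam ^ n * dist v x₀ := hzdist n v x₀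
    rw [hvu] at h1
    have h2 : lam ^ n * dist v x₀ < 2 * r := h1 ▸ hud
    have h3 : dist v x₀ < 2 * r / lam ^ n := by
      rw [lt_div_iff₀ (hzpos n), mul_comm]
      exact h2
    have h4 : 2 * r / lam ^ n < 2 * lam := by
      rw [div_lt_iff₀ (hzpos n)]
      have : lam ^ (n + 1) = lam ^ n * lam := by
        rw [zpow_add_one₀ hlamne]
      nlinarith [hn2, hzpos n]
    linarith
  have hvmem : v ∈ Metric.closedBall x₀ (2 * lam) :=
    Metric.mem_closedBall.mpr (le_of_lt hvd)
  obtain ⟨y, hyT, hyd⟩ := Set.mem_iUnion₂.mp (hTcov hvmem)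
  rw [Metric.mem_ball] at hyd
  -- w is within r of f ((p ^ n) y)
  have hkey : dist w (f ((p ^ n) y)) < r := by
    have h1 : dist w (f ((p ^ n) y)) = dist u ((p ^ n) y) := by
      have := f.isometry.dist_eq u ((p ^ n) y)
      rw [hu, f.apply_symm_apply] at this
      rw [hu]
      exact this.symm ▸ rfl
    have h2 : dist u ((p ^ n) y) = lam ^ n * dist v y := by
      rw [← hvu]
      exact hzdist n v y
    rw [h1, h2]
    calc lam ^ n * dist v y < lam ^ n * (1/2) :=
          (mul_lt_mul_iff_right₀ (hzpos n)).mpr hyd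
      _ ≤ r * (1/2) := by nlinarith [hn1]
      _ < r := by linarith
  refine Set.mem_iUnion₂.mpr ⟨f ((p ^ n) y), ?_, Metric.mem_ball.mpr hkey⟩
  exact Finset.mem_image.mpr ⟨y, hTfin.mem_toFinset.mpr hyT, rfl⟩
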